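/- Let m ≥ 2 and let x, y be finite words over {0,1,…,m−1}. (1) If φ_m(x)·0 is a factor of φ_m(y)·0, then x is a factor of y. (2) If φ_m(x) is a factor of φ_m(y) and x does not end with the letter m−1, then x is a factor of y. -/

import Mathlib

/-- The `m`-bonacci morphism `φ_m` on letters:
`φ_m(k) = 0·(k+1)` for `0 ≤ k ≤ m-2`, and `φ_m(m-1) = 0`. -/
def phiL (m a : ℕ) : List ℕ := if a = m - 1 then [0] else [0, a + 1]

/-- The `m`-bonacci morphism applied to a finite word. -/
def phiW (m : ℕ) (u : List ℕ) : List ℕ := u.flatMap (phiL m)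

/-- The iterates `h n = φ_mⁿ(0)`. -/
def hword (m : ℕ) : ℕ → List ℕ
  | 0 => [0]
  | n + 1 => phiW m (hword m n)

/-- The `m`-bonacci word, the infinite fixed point of `φ_m` beginning with `0`
(its `i`-th letter is the `i`-th letter of any sufficiently long iterate `φ_mⁿ(0)`). -/
def mbon (m : ℕ) : ℕ → ℕ := fun i => (hword m (i + 1)).getD i 0

/-- Auxiliary course-of-values construction for the p-singular words:
`zsAux m (k+1) i` gives the correct value of the (index-shifted) p-singular word
`z_{i-1}` for every `i ≤ k`. -/
def zsAux (m : ℕ) : ℕ → ℕ → List ℕ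
  | 0, _ => []
  | k + 1, i =>
    if i < k then zsAux m k i
    else if i = 0 then []
    else if i = 1 then [0]
    else if i ≤ m then
      -- here `i = n+1` with `1 ≤ n ≤ m-1`:
      -- `z_n = z_{n-2} z_{n-3} ⋯ z_1 z_0 · n · z_0 z_1 ⋯ z_{n-3} z_{n-2}`
      (((List.range (i - 2)).map (fun j => zsAux m k (i - 2 - j))).flatten)
        ++ [i - 1]
        ++ (((List.range (i - 2)).map (fun j => zsAux m k (1 + j))).flatten)
    else
      -- here `i = n+1` with `n ≥ m`:
      -- `z_n = z_{n-2} ⋯ z_{n-(m-1)} · z_{n-m} · z_{n-(m+1)} · z_{n-m} · z_{n-(m-1)} ⋯ z_{n-2}`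
      (((List.range (m - 2)).map (fun j => zsAux m k (i - 2 - j))).flatten)
        ++ zsAux m k (i - m) ++ zsAux m k (i - m - 1) ++ zsAux m k (i - m)
        ++ (((List.range (m - 2)).map (fun j => zsAux m k (i - m + 1 + j))).flatten)

/-- The (index-shifted) p-singular words for the `m`-bonacci word:
`zsw m 0 = z₋₁ = ε`, and `zsw m (n+1) = zₙ` for `n ≥ 0`, where
`z₀ = 0`, `zₙ = z_{n-2} z_{n-3} ⋯ z_1 z_0 · n · z_0 z_1 ⋯ z_{n-3} z_{n-2}` for `1 ≤ n ≤ m-1`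
(`n` denoting the single letter `n`), and
`zₙ = z_{n-2} z_{n-3} ⋯ z_{n-(m-1)} z_{n-m} z_{n-(m+1)} z_{n-m} z_{n-(m-1)} ⋯ z_{n-3} z_{n-2}`
for `n ≥ m`. -/
def zsw (m k : ℕ) : List ℕ := zsAux m (k + 1) k

/-- Let `m ≥ 2` and let `x, y` be finite words over `{0,1,…,m-1}`.
(1) If `φ_m(x)·0` is a factor of `φ_m(y)·0`, then `x` is a factor of `y`.
(2) If `φ_m(x)` is a factor of `φ_m(y)` and `x` does not end with the letter `m-1`,
then `x` is a factor of `y`. -/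
lemma phiW_nil (m : ℕ) : phiW m [] = [] := rfl

lemma phiW_cons (m a : ℕ) (x : List ℕ) :
    phiW m (a :: x) = phiL m a ++ phiW m x := by
  simp [phiW]

lemma phiW_app (m : ℕ) (x y : List ℕ) :
    phiW m (x ++ y) = phiW m x ++ phiW m y := by
  simp [phiW]

lemma head0 (m : ℕ) (w : List ℕ) : ∃ r, phiW m w ++ [0] = 0 :: r := by
  cases w with
  | nil => exact ⟨[], rfl⟩
  | cons a w =>
    rw [phiW_cons, phiL]
    split
    · exact ⟨phiW m w ++ [0], by simp⟩
    · exact ⟨(a + 1) :: (phiW m w ++ [0]), by simp⟩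

lemma phiL_len (m a : ℕ) : 1 ≤ (phiL m a).length := by
  rw [phiL]; split <;> simp

/-- An occurrence of a zero in `phiW y ++ [0]` is at a block boundary. -/
lemma splitA (m : ℕ) (y : List ℕ) : ∀ (s r : List ℕ),
    phiW m y ++ [0] = s ++ 0 :: r →
    ∃ y₁ y₂, y = y₁ ++ y₂ ∧ s = phiW m y₁ ∧ phiW m y₂ ++ [0] = 0 :: r := by
  induction y with
  | nil =>
    intro s r h
    rw [phiW_nil, List.nil_append] at h
    cases s with
    | nil =>
      refine ⟨[], [], rfl, rfl, ?_⟩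
      rw [phiW_nil, List.nil_append]
      simpa using h
    | cons c s' =>
      exfalso
      have := congrArg List.length h
      simp at this
  | cons b y ih =>
    intro s r h
    rw [phiW_cons] at h
    cases s with
    | nil =>
      exact ⟨[], b :: y, rfl, rfl, by rw [phiW_cons]; simpa using h⟩
    | cons c s' =>
      by_cases hb : b = m - 1
      · rw [phiL, if_pos hb] at h
        simp only [List.cons_append, List.nil_append, List.singleton_append,
          List.append_assoc, List.cons.injEq] at h
        obtain ⟨hc, htail⟩ := h
        obtain ⟨y₁, y₂, h1, h2, h3⟩ := ih s' r (by simpa using htail)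
        refine ⟨b :: y₁, y₂, by rw [h1, List.cons_append], ?_, h3⟩
        rw [phiW_cons, phiL, if_pos hb, h2, ← hc]
        simp
      · rw [phiL, if_neg hb] at h
        simp only [List.cons_append, List.nil_append, List.singleton_append,
          List.append_assoc, List.cons.injEq] at h
        obtain ⟨hc, htail⟩ := h
        cases s' with
        | nil =>
          exfalso
          simp only [List.nil_append, List.cons.injEq] at htail
          omega
        | cons d s'' =>
          simp only [List.cons_append, List.cons.injEq] at htail
          obtain ⟨hd, htail2⟩ := htail
          obtain ⟨y₁, y₂, h1, h2, h3⟩ := ih s'' r (by simpa using htail2)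
          refine ⟨b :: y₁, y₂, by rw [h1, List.cons_append], ?_, h3⟩
          rw [phiW_cons, phiL, if_neg hb, h2, ← hc, ← hd]
          simp
  
lemma prefB (m : ℕ) (x : List ℕ) : ∀ y : List ℕ,
    phiW m x ++ [0] <+: phiW m y ++ [0] → x <+: y := by
  induction x with
  | nil => intro y _; exact List.nil_prefix
  | cons a x ih =>
    intro y h
    cases y with
    | nil =>
      exfalso
      have hl := h.length_le
      rw [phiW_cons, phiW_nil] at hl
      simp at hl
      have := phiL_len m a
      omega
    | cons b y =>
      rw [phiW_cons, phiW_cons] at h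
      by_cases ha : a = m - 1 <;> by_cases hb : b = m - 1
      · rw [phiL, if_pos ha, phiL, if_pos hb] at h
        simp only [List.singleton_append, List.cons_append, List.append_assoc,
          List.cons_prefix_cons, true_and] at h
        rw [show a = b by omega, List.cons_prefix_cons]
        exact ⟨rfl, ih y (by simpa using h)⟩
      · exfalso
        rw [phiL, if_pos ha, phiL, if_neg hb] at h
        simp only [List.singleton_append, List.cons_append, List.nil_append,
          List.append_assoc, List.cons_prefix_cons, true_and] at h
        obtain ⟨r, hr⟩ := head0 m x
        rw [show phiW m x ++ ([0] : List ℕ) = 0 :: r from hr, List.cons_prefix_cons] at h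
        have := h.1
        omega
      · exfalso
        rw [phiL, if_neg ha, phiL, if_pos hb] at h
        simp only [List.singleton_append, List.cons_append, List.nil_append,
          List.append_assoc, List.cons_prefix_cons, true_and] at h
        obtain ⟨r, hr⟩ := head0 m y
        rw [show phiW m y ++ ([0] : List ℕ) = 0 :: r from hr, List.cons_prefix_cons] at h
        have := h.1
        omega
      · rw [phiL, if_neg ha, phiL, if_neg hb] at h
        simp only [List.singleton_append, List.cons_append, List.append_assoc,
          List.cons_prefix_cons, true_and] at h
        obtain ⟨hab, h2⟩ := h
        rw [show a = b by omega, List.cons_prefix_cons]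
        exact ⟨rfl, ih y (by simpa using h2)⟩

/-- In a φ-image, a letter following a nonzero letter is zero. -/
lemma afterNZ (m : ℕ) (y : List ℕ) : ∀ u d c v, phiW m y = u ++ d :: c :: v →
    d ≠ 0 → c = 0 := by
  induction y with
  | nil =>
    intro u d c v h _
    rw [phiW_nil] at h
    have := congrArg List.length h
    simp only [List.length_nil, List.length_append, List.length_cons] at this
    omega
  | cons b y ih =>
    intro u d c v h hd
    rw [phiW_cons, phiL] at h
    split at h
    · rw [List.singleton_append] at h
      cases u with
      | nil =>
        simp only [List.nil_append, List.cons.injEq] at h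
        exact absurd h.1.symm hd
      | cons e u' =>
        rw [List.cons_append] at h
        simp only [List.cons.injEq] at h
        exact ih u' d c v h.2 hd
    · simp only [List.cons_append, List.nil_append, List.append_assoc,
        List.cons.injEq] at h
      cases u with
      | nil =>
        simp only [List.nil_append, List.cons.injEq] at h
        exact absurd h.1.symm hd
      | cons e u' =>
        simp only [List.cons_append, List.cons.injEq] at h
        obtain ⟨-, h2⟩ := h
        cases u' with
        | nil =>
          simp only [List.nil_append, List.cons.injEq] at h2
          obtain ⟨-, h3⟩ := h2
          obtain ⟨r, hr⟩ := head0 m y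
          rw [h3] at hr
          simp only [List.cons_append, List.cons.injEq] at hr
          exact hr.1
        | cons f u'' =>
          simp only [List.cons_append, List.cons.injEq] at h2
          exact ih u'' d c v h2.2 hd

lemma key1 (m : ℕ) (x y : List ℕ) :
    (phiW m x ++ [0]) <:+: (phiW m y ++ [0]) → x <:+: y := by
  intro h
  cases x with
  | nil => exact List.nil_infix
  | cons a x' =>
    obtain ⟨s, t, hst⟩ := h
    obtain ⟨r, hr⟩ := head0 m (a :: x')
    rw [hr] at hst
    have hsp : phiW m y ++ [0] = s ++ 0 :: (r ++ t) := by
      rw [← hst]; simp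
    obtain ⟨y₁, y₂, h1, h2, h3⟩ := splitA m y s (r ++ t) hsp
    have hpre : phiW m (a :: x') ++ [0] <+: phiW m y₂ ++ [0] := by
      refine ⟨t, ?_⟩
      rw [hr, h3, List.cons_append]
    obtain ⟨t₂, ht₂⟩ := prefB m (a :: x') y₂ hpre
    exact ⟨y₁, t₂, by rw [List.append_assoc, ht₂, h1]⟩

/-- Let `m ≥ 2` and let `x, y` be finite words over `{0,1,…,m-1}`.
(1) If `φ_m(x)·0` is a factor of `φ_m(y)·0`, then `x` is a factor of `y`.
(2) If `φ_m(x)` is a factor of `φ_m(y)` and `x` does not end with the letter `m-1`,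
then `x` is a factor of `y`. -/
theorem phiW_infix (m : ℕ) (hm : 2 ≤ m) (x y : List ℕ)
    (hx : ∀ a ∈ x, a < m) (hy : ∀ a ∈ y, a < m) :
    ((phiW m x ++ [0]) <:+: (phiW m y ++ [0]) → x <:+: y) ∧
    (phiW m x <:+: phiW m y → x.getLast? ≠ some (m - 1) → x <:+: y) := by
  refine ⟨key1 m x y, ?_⟩
  intro h hlast
  rcases eq_or_ne x [] with hne | hne
  · subst hne; exact List.nil_infix
  · have hx2 : x.dropLast ++ [x.getLast hne] = x := List.dropLast_append_getLast hne
    have ham : x.getLast hne ≠ m - 1 := by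
      intro e
      exact hlast (by rw [List.getLast?_eq_getLast hne, e])
    have hphix : phiW m x = phiW m x.dropLast ++ [0, x.getLast hne + 1] := by
      conv_lhs => rw [← hx2]
      rw [phiW_app, phiW_cons, phiW_nil, phiL, if_neg ham]
      simp
    obtain ⟨s, t, hst⟩ := h
    cases t with
    | nil =>
      apply key1 m x y
      exact ⟨s, [], by rw [← hst]; simp⟩
    | cons c t' =>
      have hy' : phiW m y
          = (s ++ phiW m x.dropLast ++ [0]) ++ (x.getLast hne + 1) :: c :: t' := by
        rw [← hst, hphix]; simp
      have hc : c = 0 := afterNZ m y _ _ _ _ hy' (by omega)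
      subst hc
      apply key1 m x y
      exact ⟨s, t' ++ [0], by rw [← hst]; simp⟩
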